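/- Let k ≥ 1 and n ≥ 1 be integers and let L be a k×k integer matrix all of whose row sums and column sums are zero. Then n · det(nIₖ + L + Jₖ) = (n+k) · det(nIₖ + L), where Jₖ is the k×k all-ones matrix. -/

import Mathlib

open Matrix

/-- det of nI + J over ℚ. -/
lemma det_nI_add_J (k n : ℕ) (hk : 1 ≤ k) (hn : 1 ≤ n) :
    ((n : ℚ) • 1 + Matrix.of (fun _ _ => (1:ℚ)) : Matrix (Fin k) (Fin k) ℚ).det
      = (n : ℚ) ^ (k - 1) * ((n : ℚ) + k) := by
  have hn0 : (n : ℚ) ≠ 0 := Nat.cast_ne_zero.mpr (Nat.one_le_iff_ne_zero.mp hn)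
  have hJ : (Matrix.of (fun _ _ => (1:ℚ)) : Matrix (Fin k) (Fin k) ℚ)
      = (n : ℚ) • (Matrix.replicateCol Unit (fun _ => (1:ℚ)) * Matrix.replicateRow Unit (fun _ => (n : ℚ)⁻¹)) := by
    ext i j
    simp [Matrix.mul_apply, hn0]
  have : ((n : ℚ) • 1 + Matrix.of (fun _ _ => (1:ℚ)) : Matrix (Fin k) (Fin k) ℚ)
      = (n : ℚ) • (1 + Matrix.replicateCol Unit (fun _ => (1:ℚ)) * Matrix.replicateRow Unit (fun _ => (n : ℚ)⁻¹)) := by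
    rw [smul_add, hJ]
  rw [this, Matrix.det_smul, Matrix.det_one_add_replicateCol_mul_replicateRow (m := Fin k)]
  have : (fun _ : Fin k => (n : ℚ)⁻¹) ⬝ᵥ (fun _ : Fin k => (1:ℚ)) = (k : ℚ) / n := by
    simp [dotProduct, div_eq_mul_inv, mul_comm]
  rw [this]
  have hkk : (n : ℚ) ^ Fintype.card (Fin k) = (n : ℚ) ^ (k - 1) * n := by
    rw [Fintype.card_fin, ← pow_succ, Nat.sub_add_cancel hk]
  rw [hkk]
  field_simp

/-- For `L` with all row and column sums zero,
`n · det(nIₖ + L + Jₖ) = (n+k) · det(nIₖ + L)`. -/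
theorem det_shift_allones
    (k n : ℕ) (hk : 1 ≤ k) (hn : 1 ≤ n)
    (L : Matrix (Fin k) (Fin k) ℤ)
    (hrow : ∀ i, ∑ j, L i j = 0) (hcol : ∀ j, ∑ i, L i j = 0) :
    (n : ℤ) * ((n : ℤ) • 1 + L + Matrix.of fun _ _ => 1).det
      = ((n + k : ℕ) : ℤ) * ((n : ℤ) • 1 + L).det := by
  have hn0 : (n : ℚ) ≠ 0 := Nat.cast_ne_zero.mpr (Nat.one_le_iff_ne_zero.mp hn)
  -- move to ℚ
  set f := Int.castRingHom ℚ
  set L' : Matrix (Fin k) (Fin k) ℚ := L.map f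
  set J : Matrix (Fin k) (Fin k) ℚ := Matrix.of (fun _ _ => (1:ℚ))
  set B : Matrix (Fin k) (Fin k) ℚ := (n : ℚ) • 1 + L'
  have hrow' : ∀ i, ∑ j, L' i j = 0 := by
    intro i
    have := hrow i
    simp only [L', Matrix.map_apply, f, eq_intCast]
    exact_mod_cast congrArg (fun z : ℤ => (z : ℚ)) this
  -- key multiplication identity : B * (n•1 + J) = n • (B + J)
  have hBJ : B * ((n : ℚ) • 1 + J) = (n : ℚ) • (B + J) := by
    have hBJ' : B * J = (n : ℚ) • J := by
      ext i j
      simp only [Matrix.mul_apply, J, Matrix.of_apply, mul_one, Matrix.smul_apply,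
        smul_eq_mul]
      have : ∑ l, B i l = n := by
        simp only [B, Matrix.add_apply, Matrix.smul_apply, Matrix.one_apply, smul_eq_mul,
          Finset.sum_add_distrib, hrow' i]
        simp
      rw [this]
    rw [Matrix.mul_add, Matrix.mul_smul, Matrix.mul_one, hBJ']
    simp only [B, smul_add]
  -- take determinants
  have hdet : B.det * ((n : ℚ) ^ (k - 1) * ((n : ℚ) + k)) = (n : ℚ) ^ k * (B + J).det := by
    have h1 := congrArg Matrix.det hBJ
    rw [Matrix.det_mul, Matrix.det_smul, det_nI_add_J k n hk hn, Fintype.card_fin] at h1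
    exact h1
  have hpow : (n : ℚ) ^ k = (n : ℚ) ^ (k - 1) * n := by
    rw [← pow_succ, Nat.sub_add_cancel hk]
  have hcancel : ((n : ℚ) + k) * B.det = (n : ℚ) * (B + J).det := by
    have hp0 : (n : ℚ) ^ (k - 1) ≠ 0 := pow_ne_zero _ hn0
    apply mul_left_cancel₀ hp0
    rw [hpow] at hdet
    linarith [hdet]
  -- cast back to ℤ
  have castB : B.det = ((((n : ℤ) • 1 + L).det : ℤ) : ℚ) := by
    have h := RingHom.map_det f ((n : ℤ) • 1 + L)
    rw [show ((((n : ℤ) • 1 + L).det : ℤ) : ℚ) = f ((n : ℤ) • 1 + L).det from rfl, h]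
    congr 1
    ext i j
    simp only [RingHom.mapMatrix_apply, Matrix.map_apply, Matrix.add_apply, Matrix.smul_apply,
      Matrix.one_apply, B, L', f, eq_intCast, smul_eq_mul]
    split <;> simp
  have castBJ : (B + J).det = ((((n : ℤ) • 1 + L + Matrix.of fun _ _ => (1:ℤ)).det : ℤ) : ℚ) := by
    have h := RingHom.map_det f ((n : ℤ) • 1 + L + Matrix.of fun _ _ => (1:ℤ))
    have hmap : f.mapMatrix ((n : ℤ) • 1 + L + Matrix.of fun _ _ => (1:ℤ)) = B + J := by
      ext i j
      simp only [RingHom.mapMatrix_apply, Matrix.map_apply, Matrix.add_apply, Matrix.smul_apply,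
        Matrix.one_apply, Matrix.of_apply, B, L', J, f, eq_intCast, smul_eq_mul]
      split <;> simp
    rw [← hmap]
    exact h.symm
  have := hcancel
  rw [castB, castBJ] at this
  exact_mod_cast this.symm
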